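/- Let n ≥ 2, λ > 0, X ∈ S^n and S ∈ 𝒮. Let Ŝ := P_𝒮(S + X), ΔS := Ŝ − S, and let E ∈ S^n̄ be the sign matrix of Q(X). Then | λ·Σ_{1≤i<j≤n} Σ_{1≤s<t≤n} |X_{ij} − X_{st}| − S • X | ≤ ‖ΔS‖_F · ( ‖λ·Qᵀ(E) − Ŝ‖_F + ‖X‖_F ). -/

import Mathlib

open Matrix

noncomputable section

/-- Frobenius norm of a matrix. -/
def frobNorm {k : ℕ} (X : Matrix (Fin k) (Fin k) ℝ) : ℝ :=
  Real.sqrt (∑ i, ∑ j, X i j ^ 2)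

/-- The trace inner product `A • B = Σ_{i,j} A_{ij} B_{ij}`. -/
def minner {k : ℕ} (A B : Matrix (Fin k) (Fin k) ℝ) : ℝ := ∑ i, ∑ j, A i j * B i j

/-- The linear map `Q : S^n → S^{n̄}`, `[Q(X)]_{ab} = X_{K*(a)} − X_{K*(b)}` for `a < b`,
extended symmetrically with zero diagonal, where `K* = e` enumerates the strictly
upper-triangular positions. -/
def Qmap {n : ℕ} (e : Fin (n * (n - 1) / 2) ≃ {p : Fin n × Fin n // p.1 < p.2})
    (X : Matrix (Fin n) (Fin n) ℝ) :
    Matrix (Fin (n * (n - 1) / 2)) (Fin (n * (n - 1) / 2)) ℝ :=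
  fun a b =>
    if a < b then X (e a).1.1 (e a).1.2 - X (e b).1.1 (e b).1.2
    else if b < a then X (e b).1.1 (e b).1.2 - X (e a).1.1 (e a).1.2
    else 0

/-- The adjoint `Qᵀ : S^{n̄} → S^n`:
`[Qᵀ(Z)]_{ij} = Σ_{l > K(i,j)} Z_{K(i,j),l} − Σ_{l < K(i,j)} Z_{l,K(i,j)}` for `i < j`,
extended symmetrically with zero diagonal. -/
def QTmap {n : ℕ} (e : Fin (n * (n - 1) / 2) ≃ {p : Fin n × Fin n // p.1 < p.2})
    (Z : Matrix (Fin (n * (n - 1) / 2)) (Fin (n * (n - 1) / 2)) ℝ) :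
    Matrix (Fin n) (Fin n) ℝ :=
  fun i j =>
    if h : i < j then
      (∑ l, if e.symm ⟨(i, j), h⟩ < l then Z (e.symm ⟨(i, j), h⟩) l else 0)
        - ∑ l, if l < e.symm ⟨(i, j), h⟩ then Z l (e.symm ⟨(i, j), h⟩) else 0
    else if h' : j < i then
      (∑ l, if e.symm ⟨(j, i), h'⟩ < l then Z (e.symm ⟨(j, i), h'⟩) l else 0)
        - ∑ l, if l < e.symm ⟨(j, i), h'⟩ then Z l (e.symm ⟨(j, i), h'⟩) else 0
    else 0

/-- The set `𝒮 = {S ∈ S^n : S = Qᵀ(Z), ‖Z‖_∞ ≤ λ}`. -/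
def Sset {n : ℕ} (lam : ℝ) (e : Fin (n * (n - 1) / 2) ≃ {p : Fin n × Fin n // p.1 < p.2}) :
    Set (Matrix (Fin n) (Fin n) ℝ) :=
  {S | ∃ Z : Matrix (Fin (n * (n - 1) / 2)) (Fin (n * (n - 1) / 2)) ℝ,
    Z.IsSymm ∧ (∀ a b, |Z a b| ≤ lam) ∧ S = QTmap e Z}

section minnerLemmas
variable {k : ℕ} (A B C D : Matrix (Fin k) (Fin k) ℝ)

lemma minner_comm : minner A B = minner B A := by
  simp [minner, mul_comm]

lemma minner_sub_left : minner (A - B) C = minner A C - minner B C := by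
  simp [minner, sub_mul, Finset.sum_sub_distrib]

lemma minner_add_left : minner (A + B) C = minner A C + minner B C := by
  simp [minner, add_mul, Finset.sum_add_distrib]

lemma minner_smul_left (t : ℝ) : minner (t • A) B = t * minner A B := by
  simp [minner, Finset.mul_sum, mul_assoc]

lemma minner_self_nonneg : 0 ≤ minner A A :=
  Finset.sum_nonneg fun _ _ => Finset.sum_nonneg fun _ _ => mul_self_nonneg _

lemma frobNorm_nonneg : 0 ≤ frobNorm A := Real.sqrt_nonneg _

lemma frobNorm_sq : frobNorm A ^ 2 = minner A A := by
  rw [frobNorm, Real.sq_sqrt]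
  · simp [minner, sq]
  · exact Finset.sum_nonneg fun _ _ => Finset.sum_nonneg fun _ _ => sq_nonneg _

lemma minner_le_frob : minner A B ≤ frobNorm A * frobNorm B := by
  have h := Real.sum_mul_le_sqrt_mul_sqrt (Finset.univ (α := Fin k × Fin k))
    (fun p : Fin k × Fin k => A p.1 p.2) (fun p => B p.1 p.2)
  rw [minner, frobNorm, frobNorm, ← Finset.sum_product' (f := fun i j => A i j * B i j),
    ← Finset.sum_product' (f := fun i j => A i j ^ 2),
    ← Finset.sum_product' (f := fun i j => B i j ^ 2), Finset.univ_product_univ]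
  exact h

lemma abs_minner_le_frob : |minner A B| ≤ frobNorm A * frobNorm B := by
  rw [abs_le]
  constructor
  · have h := minner_le_frob (-A) B
    have hn : minner (-A) B = -minner A B := by simp [minner, Finset.sum_neg_distrib]
    have hf : frobNorm (-A) = frobNorm A := by simp [frobNorm]
    rw [hn, hf] at h; linarith
  · exact minner_le_frob A B

lemma minner_expand (t : ℝ) :
    minner (A - t • B) (A - t • B) =
      minner A A - 2 * t * minner A B + t ^ 2 * minner B B := by
  simp only [minner, Matrix.sub_apply, Matrix.smul_apply, smul_eq_mul]
  have h : ∀ i j : Fin k, (A i j - t * B i j) * (A i j - t * B i j)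
      = A i j * A i j - 2 * t * (A i j * B i j) + t ^ 2 * (B i j * B i j) := by
    intros; ring
  simp_rw [h, Finset.sum_add_distrib, Finset.sum_sub_distrib, ← Finset.mul_sum]

end minnerLemmas

lemma sign_mul_self' (x : ℝ) : Real.sign x * x = |x| := by
  rcases lt_trichotomy x 0 with h|h|h
  · simp [Real.sign_of_neg h, abs_of_neg h]
  · simp [h]
  · simp [Real.sign_of_pos h, abs_of_pos h]

lemma pairsum {n m : ℕ} (e : Fin m ≃ {p : Fin n × Fin n // p.1 < p.2})
    (f : Fin n → Fin n → ℝ) :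
    ∑ i, ∑ j, (if i < j then f i j else 0) = ∑ k : Fin m, f (e k).1.1 (e k).1.2 := by
  rw [← Finset.sum_product' (f := fun i j => if i < j then f i j else 0),
    Finset.univ_product_univ, ← Finset.sum_filter]
  have h2 : ∑ k : Fin m, f (e k).1.1 (e k).1.2
      = ∑ q : {p : Fin n × Fin n // p.1 < p.2}, f q.1.1 q.1.2 :=
    Equiv.sum_comp e (fun q : {p : Fin n × Fin n // p.1 < p.2} => f q.1.1 q.1.2)
  rw [h2, Finset.sum_subtype (p := fun p : Fin n × Fin n => p.1 < p.2)
    (Finset.univ.filter fun p : Fin n × Fin n => p.1 < p.2)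
    (by simp) (fun p : Fin n × Fin n => f p.1 p.2)]

lemma sym_double {m : ℕ} (F : Fin m → Fin m → ℝ) (hsym : ∀ i j, F i j = F j i)
    (hd : ∀ i, F i i = 0) :
    ∑ i, ∑ j, F i j = 2 * ∑ i, ∑ j, (if i < j then F i j else 0) := by
  have h1 : ∀ i j : Fin m, F i j
      = (if i < j then F i j else 0) + (if j < i then F i j else 0) := by
    intro i j
    rcases lt_trichotomy i j with h|h|h
    · rw [if_pos h, if_neg (asymm h), add_zero]
    · subst h; simp [hd]
    · rw [if_neg (asymm h), if_pos h, zero_add]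
  calc ∑ i, ∑ j, F i j
      = ∑ i, ∑ j, ((if i < j then F i j else 0) + (if j < i then F i j else 0)) := by
        simp_rw [← h1]
    _ = (∑ i, ∑ j, (if i < j then F i j else 0))
        + ∑ i, ∑ j, (if j < i then F i j else 0) := by
        simp_rw [Finset.sum_add_distrib]
    _ = (∑ i, ∑ j, (if i < j then F i j else 0))
        + ∑ i, ∑ j, (if i < j then F i j else 0) := by
        congr 1
        rw [Finset.sum_comm]
        exact Finset.sum_congr rfl fun j _ => Finset.sum_congr rfl fun i _ => by
          rw [hsym]
    _ = _ := by ring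
variable {n : ℕ} (e : Fin (n * (n - 1) / 2) ≃ {p : Fin n × Fin n // p.1 < p.2})

lemma Qmap_symm (X : Matrix (Fin n) (Fin n) ℝ) (a b : Fin (n * (n - 1) / 2)) :
    Qmap e X a b = Qmap e X b a := by
  unfold Qmap
  rcases lt_trichotomy a b with h|h|h
  · rw [if_pos h, if_neg (asymm h), if_pos h]
  · subst h; rfl
  · rw [if_neg (asymm h), if_pos h, if_pos h]

lemma Qmap_diag (X : Matrix (Fin n) (Fin n) ℝ) (a : Fin (n * (n - 1) / 2)) :
    Qmap e X a a = 0 := by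
  simp [Qmap]

lemma QTmap_symm (Z : Matrix (Fin (n * (n - 1) / 2)) (Fin (n * (n - 1) / 2)) ℝ)
    (i j : Fin n) : QTmap e Z i j = QTmap e Z j i := by
  unfold QTmap
  rcases lt_trichotomy i j with h|h|h
  · rw [dif_pos h, dif_neg (asymm h), dif_pos h]
  · subst h; rfl
  · rw [dif_neg (asymm h), dif_pos h, dif_pos h]

lemma QTmap_diag (Z : Matrix (Fin (n * (n - 1) / 2)) (Fin (n * (n - 1) / 2)) ℝ)
    (i : Fin n) : QTmap e Z i i = 0 := by
  simp [QTmap]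

lemma QTmap_apply_e (Z : Matrix (Fin (n * (n - 1) / 2)) (Fin (n * (n - 1) / 2)) ℝ)
    (k : Fin (n * (n - 1) / 2)) :
    QTmap e Z (e k).1.1 (e k).1.2
      = (∑ l, if k < l then Z k l else 0) - ∑ l, if l < k then Z l k else 0 := by
  have h : (e k).1.1 < (e k).1.2 := (e k).2
  have h2 : (⟨((e k).1.1, (e k).1.2), h⟩ : {p : Fin n × Fin n // p.1 < p.2}) = e k :=
    Subtype.ext rfl
  show (if h : (e k).1.1 < (e k).1.2 then _ else _) = _
  rw [dif_pos h]
  simp only [h2, Equiv.symm_apply_apply]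

lemma adjoint_id (Z : Matrix (Fin (n * (n - 1) / 2)) (Fin (n * (n - 1) / 2)) ℝ)
    (X : Matrix (Fin n) (Fin n) ℝ) (hZ : Z.IsSymm) (hX : X.IsSymm) :
    minner (QTmap e Z) X = minner Z (Qmap e X) := by
  set x : Fin (n * (n - 1) / 2) → ℝ := fun k => X (e k).1.1 (e k).1.2 with hx
  have hL : minner (QTmap e Z) X
      = 2 * ∑ k, ((∑ l, if k < l then Z k l else 0)
          - ∑ l, if l < k then Z l k else 0) * x k := by
    rw [minner, sym_double (fun i j => QTmap e Z i j * X i j)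
      (fun i j => by rw [QTmap_symm, hX.apply]) (fun i => by rw [QTmap_diag, zero_mul]),
      pairsum e (fun i j => QTmap e Z i j * X i j)]
    congr 1
    exact Finset.sum_congr rfl fun k _ => by rw [QTmap_apply_e]
  have hR : minner Z (Qmap e X)
      = 2 * ∑ a, ∑ b, (if a < b then Z a b * (x a - x b) else 0) := by
    rw [minner, sym_double (fun a b => Z a b * Qmap e X a b)
      (fun a b => by rw [hZ.apply a b, Qmap_symm]) (fun a => by rw [Qmap_diag, mul_zero])]
    congr 1
    refine Finset.sum_congr rfl fun a _ => Finset.sum_congr rfl fun b _ => ?_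
    split_ifs with h
    · rw [Qmap, if_pos h]
    · rfl
  rw [hL, hR]
  have e1 : ∀ k : Fin (n * (n - 1) / 2), ((∑ l, if k < l then Z k l else 0)
      - ∑ l, if l < k then Z l k else 0) * x k
      = (∑ l, if k < l then Z k l * x k else 0) - ∑ l, if l < k then Z l k * x k else 0 := by
    intro k
    rw [sub_mul, Finset.sum_mul, Finset.sum_mul]
    congr 1 <;> exact Finset.sum_congr rfl fun l _ => by split_ifs <;> ring
  simp_rw [e1]
  rw [Finset.sum_sub_distrib]
  have swap : ∑ k : Fin (n * (n - 1) / 2), ∑ l, (if l < k then Z l k * x k else 0)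
      = ∑ k : Fin (n * (n - 1) / 2), ∑ l, (if k < l then Z k l * x l else 0) := Finset.sum_comm
  rw [swap]
  have e2 : ∀ a b : Fin (n * (n - 1) / 2), (if a < b then Z a b * (x a - x b) else 0)
      = (if a < b then Z a b * x a else 0) - (if a < b then Z a b * x b else 0) := by
    intro a b; split_ifs <;> ring
  simp_rw [e2, Finset.sum_sub_distrib]

lemma quad_sum (X : Matrix (Fin n) (Fin n) ℝ) :
    (∑ i : Fin n, ∑ j : Fin n, ∑ s : Fin n, ∑ t : Fin n,
        if i < j ∧ s < t then |X i j - X s t| else 0)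
      = ∑ a, ∑ b, |Qmap e X a b| := by
  have h1 : ∀ i j : Fin n, (∑ s : Fin n, ∑ t : Fin n,
      if i < j ∧ s < t then |X i j - X s t| else 0)
      = if i < j then (∑ s : Fin n, ∑ t : Fin n,
          if s < t then |X i j - X s t| else 0) else 0 := by
    intro i j
    by_cases h : i < j <;> simp [h]
  simp_rw [h1]
  rw [pairsum e]
  have h2 : ∀ k, (∑ s : Fin n, ∑ t : Fin n,
      if s < t then |X (e k).1.1 (e k).1.2 - X s t| else 0)
      = ∑ b, |X (e k).1.1 (e k).1.2 - X (e b).1.1 (e b).1.2| := fun k => pairsum e _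
  simp_rw [h2]
  refine Finset.sum_congr rfl fun a _ => Finset.sum_congr rfl fun b _ => ?_
  unfold Qmap
  rcases lt_trichotomy a b with h|h|h
  · rw [if_pos h]
  · subst h; simp
  · rw [if_neg (asymm h), if_pos h, abs_sub_comm]

lemma QTmap_comb (a b : ℝ) (Z W : Matrix (Fin (n * (n - 1) / 2)) (Fin (n * (n - 1) / 2)) ℝ) :
    QTmap e (a • Z + b • W) = a • QTmap e Z + b • QTmap e W := by
  funext i j
  have key : ∀ (c : Prop) [Decidable c] (z w : ℝ),
      (if c then a * z + b * w else 0) = a * (if c then z else 0) + b * (if c then w else 0) := by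
    intros c _ z w; split_ifs <;> simp
  simp only [QTmap, Matrix.add_apply, Matrix.smul_apply, smul_eq_mul]
  split_ifs with h h'
  · simp_rw [key, Finset.sum_add_distrib, ← Finset.mul_sum]; ring
  · simp_rw [key, Finset.sum_add_distrib, ← Finset.mul_sum]; ring
  · simp

lemma QTmap_smul (t : ℝ) (Z : Matrix (Fin (n * (n - 1) / 2)) (Fin (n * (n - 1) / 2)) ℝ) :
    QTmap e (t • Z) = t • QTmap e Z := by
  have h := QTmap_comb e t 0 Z Z
  simpa using h

lemma abs_sign_le_one (x : ℝ) : |Real.sign x| ≤ 1 := by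
  rcases lt_trichotomy x 0 with h|h|h
  · simp [Real.sign_of_neg h]
  · simp [h]
  · simp [Real.sign_of_pos h]


/-- for `X ∈ S^n`, `S ∈ 𝒮`, `Ŝ = P_𝒮(S + X)`, `ΔS = Ŝ − S`, and `E` the
sign matrix of `Q(X)`,
`|λ Σ_{i<j} Σ_{s<t} |X_{ij} − X_{st}| − S • X| ≤ ‖ΔS‖_F (‖λ Qᵀ(E) − Ŝ‖_F + ‖X‖_F)`. -/
theorem stmt_19 {n : ℕ} (hn : 2 ≤ n) (lam : ℝ) (hlam : 0 < lam)
    (e : Fin (n * (n - 1) / 2) ≃ {p : Fin n × Fin n // p.1 < p.2})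
    (X S : Matrix (Fin n) (Fin n) ℝ) (hX : X.IsSymm) (hS : S ∈ Sset lam e)
    (P : Matrix (Fin n) (Fin n) ℝ → Matrix (Fin n) (Fin n) ℝ)
    (hP : ∀ M : Matrix (Fin n) (Fin n) ℝ, P M ∈ Sset lam e ∧
      ∀ T ∈ Sset lam e, frobNorm (M - P M) ≤ frobNorm (M - T))
    (Shat : Matrix (Fin n) (Fin n) ℝ) (hShat : Shat = P (S + X))
    (ΔS : Matrix (Fin n) (Fin n) ℝ) (hΔS : ΔS = Shat - S)
    (E : Matrix (Fin (n * (n - 1) / 2)) (Fin (n * (n - 1) / 2)) ℝ)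
    (hE : ∀ a b, E a b = Real.sign (Qmap e X a b)) :
    |lam * (∑ i : Fin n, ∑ j : Fin n, ∑ s : Fin n, ∑ t : Fin n,
        if i < j ∧ s < t then |X i j - X s t| else 0) - minner S X| ≤
      frobNorm ΔS * (frobNorm (lam • QTmap e E - Shat) + frobNorm X) := by
  -- basic data
  have hShat_mem : Shat ∈ Sset lam e := hShat ▸ (hP (S + X)).1
  obtain ⟨Zh, hZh_symm, hZh_le, hZh_eq⟩ := hShat_mem
  have hE_symm : E.IsSymm :=
    Matrix.ext fun a b => by rw [Matrix.transpose_apply, hE, hE, Qmap_symm]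
  have hlamE_symm : (lam • E).IsSymm := by
    unfold Matrix.IsSymm
    rw [Matrix.transpose_smul, hE_symm]
  have hlamE_le : ∀ a b, |(lam • E) a b| ≤ lam := by
    intro a b
    rw [Matrix.smul_apply, smul_eq_mul, abs_mul, abs_of_pos hlam]
    calc lam * |E a b| ≤ lam * 1 := by
          have := hE a b ▸ abs_sign_le_one (Qmap e X a b)
          exact mul_le_mul_of_nonneg_left this hlam.le
      _ = lam := mul_one lam
  set T : Matrix (Fin n) (Fin n) ℝ := lam • QTmap e E with hT
  have hT_eq : T = QTmap e (lam • E) := (QTmap_smul e lam E).symm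
  have hT_mem : T ∈ Sset lam e := ⟨lam • E, hlamE_symm, hlamE_le, hT_eq⟩
  set D : Matrix (Fin n) (Fin n) ℝ := T - Shat with hD
  -- the sum identity
  have habsE : ∀ a b, E a b * Qmap e X a b = |Qmap e X a b| := fun a b => by
    rw [hE]; exact sign_mul_self' _
  have hTX : minner T X = lam * (∑ i : Fin n, ∑ j : Fin n, ∑ s : Fin n, ∑ t : Fin n,
      if i < j ∧ s < t then |X i j - X s t| else 0) := by
    rw [hT, minner_smul_left, adjoint_id e E X hE_symm hX, quad_sum e X]
    congr 1
    rw [minner]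
    exact Finset.sum_congr rfl fun a _ => Finset.sum_congr rfl fun b _ => habsE a b
  -- nonnegativity of the first term
  have hA_nonneg : 0 ≤ minner D X := by
    rw [hD, minner_sub_left, sub_nonneg, hZh_eq, adjoint_id e Zh X hZh_symm hX,
      hT_eq, adjoint_id e (lam • E) X hlamE_symm hX]
    unfold minner
    refine Finset.sum_le_sum fun a _ => Finset.sum_le_sum fun b _ => ?_
    calc Zh a b * Qmap e X a b ≤ |Zh a b * Qmap e X a b| := le_abs_self _
      _ = |Zh a b| * |Qmap e X a b| := abs_mul _ _
      _ ≤ lam * |Qmap e X a b| := mul_le_mul_of_nonneg_right (hZh_le a b) (abs_nonneg _)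
      _ = lam * (E a b * Qmap e X a b) := by rw [habsE]
      _ = (lam • E) a b * Qmap e X a b := by
          rw [Matrix.smul_apply, smul_eq_mul, mul_assoc]
  -- variational inequality
  set c : ℝ := minner (S + X - Shat) D with hc_def
  set C : ℝ := minner D D with hC_def
  have step : ∀ t : ℝ, 0 < t → t ≤ 1 → 2 * t * c ≤ t ^ 2 * C := by
    intro t ht ht1
    set Zt := (1 - t) • Zh + t • (lam • E) with hZt
    have hZt_eq : QTmap e Zt = Shat + t • D := by
      rw [hZt, QTmap_comb, ← hZh_eq, ← hT_eq, hD]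
      ext i j
      simp only [Matrix.add_apply, Matrix.smul_apply, Matrix.sub_apply, smul_eq_mul]
      ring
    have hZt_symm : Zt.IsSymm := by
      unfold Matrix.IsSymm
      rw [hZt, Matrix.transpose_add, Matrix.transpose_smul, Matrix.transpose_smul,
        Matrix.transpose_smul, hZh_symm, hE_symm]
    have hZt_le : ∀ a b, |Zt a b| ≤ lam := by
      intro a b
      rw [hZt]
      simp only [Matrix.add_apply, Matrix.smul_apply, smul_eq_mul]
      calc |(1 - t) * Zh a b + t * (lam * E a b)|
          ≤ |(1 - t) * Zh a b| + |t * (lam * E a b)| := abs_add_le _ _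
        _ = (1 - t) * |Zh a b| + t * |lam * E a b| := by
            rw [abs_mul, abs_mul, abs_of_nonneg (by linarith : (0:ℝ) ≤ 1 - t),
              abs_of_pos ht]
        _ ≤ (1 - t) * lam + t * lam := by
            have h1 := hZh_le a b
            have h2 : |lam * E a b| ≤ lam := by
              have := hlamE_le a b
              rwa [Matrix.smul_apply, smul_eq_mul] at this
            have ht0 : (0:ℝ) ≤ 1 - t := by linarith
            exact add_le_add (mul_le_mul_of_nonneg_left h1 ht0)
              (mul_le_mul_of_nonneg_left h2 ht.le)
        _ = lam := by ring
    have hmem : Shat + t • D ∈ Sset lam e := ⟨Zt, hZt_symm, hZt_le, hZt_eq.symm⟩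
    have hdist := (hP (S + X)).2 _ hmem
    rw [← hShat] at hdist
    have hsq : minner (S + X - Shat) (S + X - Shat)
        ≤ minner (S + X - (Shat + t • D)) (S + X - (Shat + t • D)) := by
      have h2 := pow_le_pow_left₀ (frobNorm_nonneg _) hdist 2
      rwa [frobNorm_sq, frobNorm_sq] at h2
    have hrw : S + X - (Shat + t • D) = (S + X - Shat) - t • D := by
      ext i j
      simp only [Matrix.sub_apply, Matrix.add_apply, Matrix.smul_apply, smul_eq_mul]
      ring
    rw [hrw, minner_expand] at hsq
    rw [← hc_def, ← hC_def] at hsq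
    linarith
  have hc_le : c ≤ 0 := by
    by_contra hcpos
    push_neg at hcpos
    have hC0 : 0 ≤ C := minner_self_nonneg D
    rcases eq_or_lt_of_le hC0 with h0 | h0
    · have h1 := step 1 one_pos le_rfl
      rw [← h0] at h1
      nlinarith
    · set t := min 1 (c / C) with ht_def
      have ht : 0 < t := lt_min one_pos (div_pos hcpos h0)
      have ht1 : t ≤ 1 := min_le_left _ _
      have h1 := step t ht ht1
      have htC : t * C ≤ c := by
        have h2 : t ≤ c / C := min_le_right _ _
        calc t * C ≤ (c / C) * C := mul_le_mul_of_nonneg_right h2 h0.le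
          _ = c := div_mul_cancel₀ c h0.ne'
      nlinarith
  -- combine
  have h1 : minner D X ≤ frobNorm ΔS * frobNorm D := by
    have hrw : S + X - Shat = X - ΔS := by
      rw [hΔS]
      ext i j
      simp only [Matrix.sub_apply, Matrix.add_apply]
      ring
    rw [hc_def, hrw, minner_sub_left] at hc_le
    have h2 : minner X D ≤ minner ΔS D := by linarith
    calc minner D X = minner X D := minner_comm _ _
      _ ≤ minner ΔS D := h2
      _ ≤ frobNorm ΔS * frobNorm D := minner_le_frob _ _
  have h2 : |minner ΔS X| ≤ frobNorm ΔS * frobNorm X := abs_minner_le_frob _ _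
  have key : lam * (∑ i : Fin n, ∑ j : Fin n, ∑ s : Fin n, ∑ t : Fin n,
      if i < j ∧ s < t then |X i j - X s t| else 0) - minner S X
      = minner D X + minner ΔS X := by
    rw [← hTX, hD, hΔS, minner_sub_left, minner_sub_left]
    ring
  rw [key]
  calc |minner D X + minner ΔS X| ≤ |minner D X| + |minner ΔS X| := abs_add_le _ _
    _ = minner D X + |minner ΔS X| := by rw [abs_of_nonneg hA_nonneg]
    _ ≤ frobNorm ΔS * frobNorm D + frobNorm ΔS * frobNorm X := add_le_add h1 h2
    _ = frobNorm ΔS * (frobNorm (lam • QTmap e E - Shat) + frobNorm X) := by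
        rw [hD, hT]; ring
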